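/- With the choices a_n as above, r_n := a_{n+1} − a_n = 1/((n+1+k₀)²μ(1/(n+1+k₀))) and z_n = (n+k₀)³, the quantity p_n := (z_{n+1} − z_n) r_n satisfies p_n > 1 for all n ≥ 1 when k₀ is large enough, and sup_n p_n r_n^{−1} z_n^{−1} / μ(r_n) < +∞. -/

import Mathlib

open Set Filter MeasureTheory

set_option maxHeartbeats 1000000 in
theorem stmt_18 (μ : ℝ → ℝ) (hconc : ConcaveOn ℝ (Icc (0:ℝ) 1) μ)
    (hmono : StrictMonoOn μ (Icc (0:ℝ) 1)) (h0 : μ 0 = 0)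
    (hmap : ∀ τ ∈ Icc (0:ℝ) 1, μ τ ∈ Icc (0:ℝ) 1)
    (hnotOsgood : MeasureTheory.IntegrableOn (fun s => 1 / μ s) (Ioc (0:ℝ) 1)) :
    ∃ k₀ : ℕ, 1 ≤ k₀ ∧
      ∀ r z p : ℕ → ℝ,
        (∀ n : ℕ, r n = 1 / (((n : ℝ) + 1 + k₀) ^ 2 * μ (1 / ((n : ℝ) + 1 + k₀)))) →
        (∀ n : ℕ, z n = ((n : ℝ) + k₀) ^ 3) →
        (∀ n : ℕ, p n = (z (n + 1) - z n) * r n) →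
        (∀ n : ℕ, 1 ≤ n → 1 < p n) ∧
        ∃ C : ℝ, ∀ n : ℕ, 1 ≤ n → p n * (r n)⁻¹ * (z n)⁻¹ / μ (r n) ≤ C := by
  have hμpos : ∀ s ∈ Ioc (0:ℝ) 1, 0 < μ s := by
    intro s hs
    have h := hmono (left_mem_Icc.mpr zero_le_one) ⟨hs.1.le, hs.2⟩ hs.1
    simpa [h0] using h
  have hμmono : MonotoneOn μ (Icc (0:ℝ) 1) := hmono.monotoneOn
  obtain ⟨I, hIdef⟩ : ∃ I : ℝ, I = ∫ s in Ioc (0:ℝ) 1, 1 / μ s := ⟨_, rfl⟩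
  have key : ∀ t ∈ Ioc (0:ℝ) (1/2), t ≤ I * μ (2*t) := by
    intro t ht
    have h2t : 2*t ∈ Ioc (0:ℝ) 1 := ⟨by linarith [ht.1], by linarith [ht.2]⟩
    have hμ2t := hμpos _ h2t
    have hsub : Ioc t (2*t) ⊆ Ioc (0:ℝ) 1 := fun x hx =>
      ⟨lt_trans ht.1 hx.1, le_trans hx.2 h2t.2⟩
    have hint : IntegrableOn (fun s => 1/μ s) (Ioc t (2*t)) := hnotOsgood.mono_set hsub
    have h1 : (∫ _s in Ioc t (2*t), 1/μ (2*t)) = t * (1 / μ (2*t)) := by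
      rw [setIntegral_const, Measure.real, Real.volume_Ioc, smul_eq_mul,
        ENNReal.toReal_ofReal (by linarith [ht.1] : (0:ℝ) ≤ 2*t - t)]
      ring
    have h2 : (∫ _s in Ioc t (2*t), 1/μ (2*t)) ≤ ∫ s in Ioc t (2*t), 1/μ s := by
      refine setIntegral_mono_on ((integrableOn_const_iff (C := 1/μ (2*t))).mpr (Or.inr ?_)) hint measurableSet_Ioc ?_
      · rw [Real.volume_Ioc]; exact ENNReal.ofReal_lt_top
      · intro x hx
        have hx1 : x ∈ Ioc (0:ℝ) 1 := hsub hx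
        exact one_div_le_one_div_of_le (hμpos _ hx1)
          (hμmono ⟨hx1.1.le, hx1.2⟩ ⟨h2t.1.le, h2t.2⟩ hx.2)
    have h3 : (∫ s in Ioc t (2*t), 1/μ s) ≤ I := by
      rw [hIdef]
      refine setIntegral_mono_set hnotOsgood ?_ (HasSubset.Subset.eventuallyLE hsub)
      filter_upwards [ae_restrict_mem measurableSet_Ioc] with x hx
      exact (one_div_pos.mpr (hμpos _ hx)).le
    have h4 : t * (1 / μ (2*t)) ≤ I := by linarith
    have h5 : t / μ (2*t) ≤ I := by rw [div_eq_mul_one_div]; exact h4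
    rw [div_le_iff₀ hμ2t] at h5
    linarith
  have hlin : ∀ s ∈ Ioc (0:ℝ) 1, s ≤ 2 * I * μ s := by
    intro s hs
    have h := key (s/2) ⟨by linarith [hs.1], by linarith [hs.2]⟩
    have h2 : 2 * (s/2) = s := by ring
    rw [h2] at h
    linarith
  have hμ1 : μ 1 ≤ 1 := (hmap 1 (right_mem_Icc.mpr zero_le_one)).2
  have hμ1' : 0 < μ 1 := hμpos 1 ⟨zero_lt_one, le_refl 1⟩
  have hI1 : 1 ≤ 2 * I := by nlinarith [hlin 1 ⟨zero_lt_one, le_refl 1⟩]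
  have hIpos : 0 < I := by linarith
  obtain ⟨c, hcdef⟩ : ∃ c : ℝ, c = 1 / (2*I) := ⟨_, rfl⟩
  have hcpos : 0 < c := by rw [hcdef]; positivity
  have hc1 : c ≤ 1 := by rw [hcdef, div_le_one (by linarith)]; linarith
  have hlin' : ∀ s ∈ Ioc (0:ℝ) 1, c * s ≤ μ s := by
    intro s hs
    have hcs : c * s = s / (2*I) := by rw [hcdef]; ring
    rw [hcs, div_le_iff₀ (by linarith : (0:ℝ) < 2*I)]
    nlinarith [hlin s hs]
  have hcc : ∀ τ ∈ Icc (0:ℝ) 1, ∀ l ∈ Icc (0:ℝ) 1, l * μ τ ≤ μ (l * τ) := by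
    intro τ hτ l hl
    have h := hconc.2 (left_mem_Icc.mpr zero_le_one) hτ
      (by linarith [hl.2] : (0:ℝ) ≤ 1 - l) hl.1 (by ring)
    simpa [h0] using h
  refine ⟨⌈1/c⌉₊ + 1, Nat.le_add_left 1 _, ?_⟩
  have hKc : 1/c ≤ ((⌈1/c⌉₊ + 1 : ℕ):ℝ) := by
    calc 1/c ≤ (⌈1/c⌉₊ : ℝ) := Nat.le_ceil _
    _ ≤ _ := by push_cast; linarith
  intro r z p hr hz hp
  have main : ∀ n : ℕ, 1 ≤ n →
      1 < p n ∧ p n * (r n)⁻¹ * (z n)⁻¹ / μ (r n) ≤ 14 / c := by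
    intro n hn
    obtain ⟨m, hm⟩ : ∃ m : ℝ, m = (n:ℝ) + ((⌈1/c⌉₊ + 1 : ℕ):ℝ) := ⟨_, rfl⟩
    have hm2 : 2 ≤ m := by
      have h1 : (1:ℝ) ≤ (n:ℝ) := by exact_mod_cast hn
      have h2 : (1:ℝ) ≤ ((⌈1/c⌉₊ + 1 : ℕ):ℝ) := by push_cast; linarith [Nat.cast_nonneg (α := ℝ) ⌈1/c⌉₊]
      rw [hm]; linarith
    have hmK : 1/c ≤ m + 1 := by
      rw [hm]
      have h1 : (0:ℝ) ≤ (n:ℝ) := Nat.cast_nonneg n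
      linarith [hKc]
    have hN : (n:ℝ) + 1 + ((⌈1/c⌉₊ + 1 : ℕ):ℝ) = m + 1 := by rw [hm]; ring
    have hm1pos : (0:ℝ) < m + 1 := by linarith
    have hinvN : 1/(m+1) ∈ Ioc (0:ℝ) 1 :=
      ⟨by positivity, by rw [div_le_one hm1pos]; linarith⟩
    obtain ⟨u, hu⟩ : ∃ u : ℝ, u = μ (1/(m+1)) := ⟨_, rfl⟩
    have hupos : 0 < u := hu ▸ hμpos _ hinvN
    have hule : u ≤ 1 := hu ▸ (hmap _ ⟨hinvN.1.le, hinvN.2⟩).2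
    have huc : c ≤ u * (m+1) := by
      have h := hlin' _ hinvN
      rw [← hu, mul_one_div, div_le_iff₀ hm1pos] at h
      exact h
    have hrn : r n = 1 / ((m+1)^2 * u) := by rw [hr n, hN, hu]
    have hdenpos : (0:ℝ) < (m+1)^2 * u := by positivity
    have hrpos : 0 < r n := by rw [hrn]; positivity
    have hden1 : 1 ≤ (m+1)^2 * u := by
      have h2 : 1 ≤ c * (m+1) := by
        have := mul_le_mul_of_nonneg_left hmK hcpos.le
        rw [mul_one_div, div_self (ne_of_gt hcpos)] at this
        exact this
      nlinarith [huc]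
    have hrle : r n ≤ 1 := by
      rw [hrn, div_le_one hdenpos]; exact hden1
    have hzn : z n = m^3 := by rw [hz n, hm]
    have hzdiff : z (n+1) - z n = (m+1)^3 - m^3 := by
      rw [hz (n+1), hz n, hm]; push_cast; ring
    constructor
    · rw [hp n, hzdiff, hrn, mul_one_div, lt_div_iff₀ hdenpos]
      nlinarith
    · have hμr : c/(m+1) ≤ μ (r n) := by
        rcases le_or_gt (1/(m+1)) (r n) with h | h
        · have hmo := hμmono ⟨hinvN.1.le, hinvN.2⟩ ⟨hrpos.le, hrle⟩ h
          calc c/(m+1) ≤ u := by rw [div_le_iff₀ hm1pos]; exact huc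
          _ ≤ μ (r n) := hu ▸ hmo
        · have h' : r n * (m+1) < 1 := (lt_div_iff₀ hm1pos).mp h
          have hl : (m+1) * r n ∈ Icc (0:ℝ) 1 := by
            constructor
            · positivity
            · nlinarith [h']
          have h2 := hcc (1/(m+1)) ⟨hinvN.1.le, hinvN.2⟩ ((m+1) * r n) hl
          have h3 : (m+1) * r n * (1/(m+1)) = r n := by
            field_simp
          rw [h3, ← hu] at h2
          have h4 : (m+1) * r n * u = 1/(m+1) := by
            rw [hrn]
            field_simp
          have h5 : c/(m+1) ≤ 1/(m+1) := by gcongr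
          linarith
      have hμrpos : 0 < μ (r n) := lt_of_lt_of_le (by positivity) hμr
      have hexpr : p n * (r n)⁻¹ * (z n)⁻¹ / μ (r n)
          = ((m+1)^3 - m^3) / (m^3 * μ (r n)) := by
        rw [hp n, hzdiff, hzn]
        have hrne : r n ≠ 0 := ne_of_gt hrpos
        have hm3 : (m:ℝ)^3 ≠ 0 := by positivity
        field_simp
      rw [hexpr, div_le_div_iff₀ (by positivity) hcpos]
      have hpoly : ((m+1)^3 - m^3) * (m+1) ≤ 14 * m^3 := by
        nlinarith [mul_nonneg (sq_nonneg m) (by linarith : (0:ℝ) ≤ m - 2),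
          mul_nonneg (by linarith : (0:ℝ) ≤ m) (by linarith : (0:ℝ) ≤ m - 2), hm2]
      have hA : ((m+1)^3 - m^3) * (m+1) * c ≤ 14 * m^3 * c :=
        mul_le_mul_of_nonneg_right hpoly hcpos.le
      have hμr' : c ≤ μ (r n) * (m+1) := (div_le_iff₀ hm1pos).mp hμr
      have hB : 14 * m^3 * c ≤ 14 * m^3 * (μ (r n) * (m+1)) :=
        mul_le_mul_of_nonneg_left hμr' (by positivity)
      apply le_of_mul_le_mul_right ?_ hm1pos
      nlinarith [hA, hB]
  exact ⟨fun n hn => (main n hn).1, ⟨14/c, fun n hn => (main n hn).2⟩⟩
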